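/- Suppose v : ℝ → ℝ is continuous with v(t) > η > 0 for all t ≥ 0, and x : ℝ → ℝ is bounded with x(t) → 0 as t → ∞. Then the function t ↦ ∫₀ᵗ exp(−∫ₛᵗ v(u) du)·x(s) ds tends to 0 as t → ∞. -/

import Mathlib

open Real Filter

lemma aux_exp_int (η c a b : ℝ) (hη : η ≠ 0) :
    ∫ s in a..b, Real.exp (-(η * (c - s))) =
      (Real.exp (-(η * (c - b))) - Real.exp (-(η * (c - a)))) / η := by
  have h : ∀ s : ℝ, Real.exp (-(η * (c - s))) = Real.exp (-(η * c)) * Real.exp (η * s) := by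
    intro s; rw [← Real.exp_add]; ring_nf
  simp only [h]
  rw [intervalIntegral.integral_const_mul,
    intervalIntegral.integral_comp_mul_left (fun u => Real.exp u) hη, smul_eq_mul,
    integral_exp]
  field_simp

theorem stmt_3 (v x : ℝ → ℝ) (hv : Continuous v) (η : ℝ) (hη : 0 < η)
    (hvη : ∀ t : ℝ, 0 ≤ t → η < v t)
    (hxm : Measurable x) (M : ℝ) (hxb : ∀ t : ℝ, |x t| ≤ M)
    (hx0 : Tendsto x atTop (nhds 0)) :
    Tendsto (fun t : ℝ => ∫ s in (0:ℝ)..t, Real.exp (-∫ u in s..t, v u) * x s)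
      atTop (nhds 0) := by
  have hM : 0 ≤ M := le_trans (abs_nonneg _) (hxb 0)
  have hvi : ∀ a b : ℝ, IntervalIntegrable v MeasureTheory.volume a b :=
    fun a b => hv.intervalIntegrable a b
  -- continuity of s ↦ exp(-∫ s..t v)
  have hw : ∀ t : ℝ, Continuous (fun s => Real.exp (-∫ u in s..t, v u)) := by
    intro t
    have h1 : Continuous fun s => ∫ u in (0:ℝ)..s, v u :=
      intervalIntegral.continuous_primitive hvi 0
    have h2 : ∀ s : ℝ, (∫ u in s..t, v u) = (∫ u in (0:ℝ)..t, v u) - ∫ u in (0:ℝ)..s, v u := by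
      intro s
      rw [← intervalIntegral.integral_add_adjacent_intervals (hvi 0 s) (hvi s t)]; ring
    have h3 : Continuous fun s : ℝ =>
        Real.exp (-((∫ u in (0:ℝ)..t, v u) - ∫ u in (0:ℝ)..s, v u)) :=
      Real.continuous_exp.comp (continuous_const.sub h1).neg
    exact h3.congr fun s => by rw [h2 s]
  -- x interval integrable
  have hxi : ∀ a b : ℝ, IntervalIntegrable x MeasureTheory.volume a b := by
    intro a b
    exact (intervalIntegrable_const (c := M)).mono_fun' hxm.aestronglyMeasurable
      (Filter.Eventually.of_forall fun s => by simpa [Real.norm_eq_abs] using hxb s)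
  -- integrand interval integrable
  have hIf : ∀ t a b : ℝ,
      IntervalIntegrable (fun s => Real.exp (-∫ u in s..t, v u) * x s)
        MeasureTheory.volume a b :=
    fun t a b => (hxi a b).continuousOn_mul (hw t).continuousOn
  -- key exponential bound
  have hkey : ∀ s t : ℝ, 0 ≤ s → s ≤ t →
      Real.exp (-∫ u in s..t, v u) ≤ Real.exp (-(η * (t - s))) := by
    intro s t hs hst
    apply Real.exp_le_exp.mpr
    rw [neg_le_neg_iff]
    have heq : η * (t - s) = ∫ _u in s..t, η := by
      rw [intervalIntegral.integral_const, smul_eq_mul]; ring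
    rw [heq]
    exact intervalIntegral.integral_mono_on hst intervalIntegrable_const (hvi s t)
      (fun u hu => le_of_lt (hvη u (le_trans hs hu.1)))
  rw [NormedAddCommGroup.tendsto_nhds_zero]
  intro ε hε
  obtain ⟨T, hT⟩ := (Metric.tendsto_atTop.mp hx0) (η * ε / 4) (by positivity)
  set T' : ℝ := max T 0 with hT'def
  have h0T : (0:ℝ) ≤ T' := le_max_right _ _
  have hxT : ∀ s : ℝ, T' ≤ s → |x s| ≤ η * ε / 4 := fun s hs =>
    le_of_lt (by simpa [Real.dist_eq] using hT s (le_trans (le_max_left _ _) hs))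
  have h1 : Tendsto (fun t => M * Real.exp (-(η * (t - T'))) / η) atTop (nhds 0) := by
    have he : Tendsto (fun t : ℝ => Real.exp (-(η * (t - T')))) atTop (nhds 0) := by
      apply Real.tendsto_exp_atBot.comp
      have hh : Tendsto (fun t : ℝ => η * (t - T')) atTop atTop :=
        (tendsto_atTop_add_const_right _ _ tendsto_id).const_mul_atTop hη
      exact tendsto_neg_atTop_atBot.comp hh
    have := (he.const_mul M).div_const η
    simpa using this
  have h2 : ∀ᶠ t : ℝ in atTop, M * Real.exp (-(η * (t - T'))) / η < ε / 4 :=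
    h1.eventually_lt_const (by positivity)
  filter_upwards [h2, eventually_ge_atTop T'] with t ht1 ht2
  have h0t : (0:ℝ) ≤ t := le_trans h0T ht2
  rw [← intervalIntegral.integral_add_adjacent_intervals (hIf t 0 T') (hIf t T' t)]
  have habs : ∀ (a b : ℝ), 0 ≤ a → b ≤ t → a ≤ b → (C : ℝ) → (∀ s ∈ Set.Icc a b, |x s| ≤ C) →
      |∫ s in a..b, Real.exp (-∫ u in s..t, v u) * x s| ≤
        C * (Real.exp (-(η * (t - b))) - Real.exp (-(η * (t - a)))) / η := by
    intro a b ha hbt hab C hC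
    have hC0 : 0 ≤ C := le_trans (abs_nonneg _) (hC a ⟨le_refl a, hab⟩)
    calc |∫ s in a..b, Real.exp (-∫ u in s..t, v u) * x s|
        ≤ ∫ s in a..b, |Real.exp (-∫ u in s..t, v u) * x s| :=
          intervalIntegral.abs_integral_le_integral_abs hab
      _ ≤ ∫ s in a..b, Real.exp (-(η * (t - s))) * C := by
          apply intervalIntegral.integral_mono_on hab
          · exact (hIf t a b).abs
          · exact ((Real.continuous_exp.comp
              (continuous_const.mul (continuous_const.sub continuous_id)).neg).mul
              continuous_const).intervalIntegrable a b
          · intro s hs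
            rw [abs_mul, Real.abs_exp]
            exact mul_le_mul (hkey s t (le_trans ha hs.1) (le_trans hs.2 hbt)) (hC s hs)
              (abs_nonneg _) (Real.exp_nonneg _)
      _ = C * (Real.exp (-(η * (t - b))) - Real.exp (-(η * (t - a)))) / η := by
          rw [intervalIntegral.integral_mul_const, aux_exp_int η t a b (ne_of_gt hη)]
          ring
  have hA := habs 0 T' le_rfl ht2 h0T M (fun s _ => hxb s)
  have hB := habs T' t h0T le_rfl ht2 (η * ε / 4) (fun s hs => hxT s hs.1)
  have hA' : |∫ s in (0:ℝ)..T', Real.exp (-∫ u in s..t, v u) * x s| < ε / 4 := by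
    refine lt_of_le_of_lt (le_trans hA ?_) ht1
    gcongr
    linarith [Real.exp_nonneg (-(η * (t - 0)))]
  have hB' : |∫ s in T'..t, Real.exp (-∫ u in s..t, v u) * x s| ≤ ε / 4 := by
    refine le_trans hB ?_
    have h1' : Real.exp (-(η * (t - t))) - Real.exp (-(η * (t - T'))) ≤ 1 := by
      have := Real.exp_nonneg (-(η * (t - T')))
      simp only [sub_self, mul_zero, neg_zero, Real.exp_zero]
      linarith
    have h2' : 0 ≤ Real.exp (-(η * (t - t))) - Real.exp (-(η * (t - T'))) := by
      have : -(η * (t - T')) ≤ -(η * (t - t)) := by nlinarith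
      linarith [Real.exp_le_exp.mpr this]
    rw [div_le_iff₀ hη]
    calc η * ε / 4 * (Real.exp (-(η * (t - t))) - Real.exp (-(η * (t - T'))))
        ≤ η * ε / 4 * 1 := by
          apply mul_le_mul_of_nonneg_left h1' (by positivity)
      _ = ε / 4 * η := by ring
  calc ‖(∫ s in (0:ℝ)..T', Real.exp (-∫ u in s..t, v u) * x s) +
        ∫ s in T'..t, Real.exp (-∫ u in s..t, v u) * x s‖
      ≤ ‖∫ s in (0:ℝ)..T', Real.exp (-∫ u in s..t, v u) * x s‖ +
        ‖∫ s in T'..t, Real.exp (-∫ u in s..t, v u) * x s‖ := norm_add_le _ _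
    _ < ε / 4 + ε / 4 := by
        rw [Real.norm_eq_abs, Real.norm_eq_abs]
        exact add_lt_add_of_lt_of_le hA' hB'
    _ < ε := by linarith
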